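/- Let R be a commutative ring and f ∈ R. Then for each n, the natural map W_n(R) → W_n(R[1/f]) induced by localization identifies W_n(R[1/f]) with the localization W_n(R)[1/[f]], where [f] ∈ W_n(R) is the Teichmüller lift of f. That is, the induced map W_n(R)[1/[f]] → W_n(R[1/f]) is an isomorphism of rings. -/

import Mathlib

open WittVector

/-- Functoriality of truncated Witt vectors: the ring homomorphism
`W_n(R) → W_n(S)` induced by `f : R →+* S`. -/
noncomputable def twMap {p : ℕ} [hp : Fact p.Prime] {R S : Type*} [CommRing R] [CommRing S]
    (n : ℕ) (f : R →+* S) :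
    TruncatedWittVector p n R →+* TruncatedWittVector p n S :=
  RingHom.liftOfRightInverse (WittVector.truncate n) TruncatedWittVector.out
    (fun x => by ext i; rw [WittVector.coeff_truncate, TruncatedWittVector.coeff_out])
    ⟨(WittVector.truncate n).comp (WittVector.map f), fun x hx => by
      rw [WittVector.mem_ker_truncate] at hx
      rw [RingHom.mem_ker, RingHom.comp_apply]
      have : ∀ i < n, (WittVector.map f x).coeff i = 0 := by
        intro i hi
        rw [WittVector.map_coeff, hx i hi, map_zero]
      ext i
      rw [WittVector.coeff_truncate, this i i.is_lt, TruncatedWittVector.coeff_zero]⟩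


namespace WittLocAux

variable {p : ℕ} [hp : Fact p.Prime]

theorem map_mk {R S : Type*} [CommRing R] [CommRing S] (g : R →+* S) (h : ℕ → R) :
    WittVector.map g (WittVector.mk p h) = WittVector.mk p (g ∘ h) := by
  ext i
  simp [WittVector.map_coeff, WittVector.coeff_mk]

private theorem aux₁ {σ : Type*} (a : MvPolynomial σ ℚ) (g : ℕ → MvPolynomial σ ℚ) :
    teichmuller p a * WittVector.mk p g = WittVector.mk p (fun i => a ^ p ^ i * g i) := by
  apply (WittVector.ghostMap.bijective_of_invertible p _).1
  funext k
  rw [map_mul]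
  simp only [Pi.mul_apply, ghostMap_apply]
  rw [ghostComponent_teichmuller, ghostComponent_apply, ghostComponent_apply,
    aeval_wittPolynomial, aeval_wittPolynomial]
  simp only [WittVector.coeff_mk]
  rw [Finset.mul_sum]
  refine Finset.sum_congr rfl fun i hi => ?_
  rw [Finset.mem_range] at hi
  have h : p ^ i * p ^ (k - i) = p ^ k := by
    rw [← pow_add, Nat.add_sub_cancel' (Nat.lt_succ_iff.mp hi)]
  rw [mul_pow, ← pow_mul, h]
  ring

private theorem aux₂ {σ : Type*} (a : MvPolynomial σ ℤ) (g : ℕ → MvPolynomial σ ℤ) :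
    teichmuller p a * WittVector.mk p g = WittVector.mk p (fun i => a ^ p ^ i * g i) := by
  refine WittVector.map_injective (MvPolynomial.map (Int.castRingHom ℚ))
    (MvPolynomial.map_injective _ Int.cast_injective) ?_
  rw [map_mul, map_teichmuller, map_mk, map_mk, aux₁]
  congr 1
  funext i
  simp [Function.comp]

theorem teichmuller_mul_coeff {R : Type*} [CommRing R] (a : R) (x : WittVector p R) (i : ℕ) :
    (teichmuller p a * x).coeff i = a ^ p ^ i * x.coeff i := by
  let φ : MvPolynomial (Option ℕ) ℤ →+* R :=
    MvPolynomial.eval₂Hom (Int.castRingHom R) (fun o => o.elim a x.coeff)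
  have h := congrArg (WittVector.map φ) (aux₂ (p := p) (MvPolynomial.X (R := ℤ) none)
      (fun i => MvPolynomial.X (some i)))
  rw [map_mul, map_teichmuller, map_mk, map_mk] at h
  have hφn : φ (MvPolynomial.X none) = a := by simp [φ]
  have hφs : ∀ j, φ (MvPolynomial.X (some j)) = x.coeff j := by intro j; simp [φ]
  have hx : WittVector.mk p (φ ∘ fun i => MvPolynomial.X (some i)) = x := by
    ext j; simp [WittVector.coeff_mk, Function.comp, hφs]
  rw [hφn, hx] at h
  rw [h]
  simp [WittVector.coeff_mk, Function.comp, map_mul, map_pow, hφn, hφs]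

theorem truncate_out' {R : Type*} [CommRing R] {n : ℕ} (y : TruncatedWittVector p n R) :
    WittVector.truncate n y.out = y := by
  ext i; rw [WittVector.coeff_truncate, TruncatedWittVector.coeff_out]

theorem trunc_teich_mul_coeff {R : Type*} [CommRing R] {n : ℕ} (c : R)
    (y : TruncatedWittVector p n R) (i : Fin n) :
    (WittVector.truncate n (teichmuller p c) * y).coeff i = c ^ p ^ (i : ℕ) * y.coeff i := by
  conv_lhs => rw [← truncate_out' y, ← map_mul]
  rw [WittVector.coeff_truncate, teichmuller_mul_coeff, TruncatedWittVector.coeff_out]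



theorem twMap_truncate {p : ℕ} [hp : Fact p.Prime] {R S : Type*} [CommRing R] [CommRing S]
    {n : ℕ} (g : R →+* S) (x : WittVector p R) :
    twMap n g (WittVector.truncate n x) = WittVector.truncate n (WittVector.map g x) := by
  exact RingHom.liftOfRightInverse_comp_apply (WittVector.truncate n)
    TruncatedWittVector.out
    (fun x => by ext i; rw [WittVector.coeff_truncate, TruncatedWittVector.coeff_out]) _ x

theorem twMap_coeff {p : ℕ} [hp : Fact p.Prime] {R S : Type*} [CommRing R] [CommRing S]
    {n : ℕ} (g : R →+* S) (y : TruncatedWittVector p n R) (i : Fin n) :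
    (twMap n g y).coeff i = g (y.coeff i) := by
  conv_lhs => rw [← truncate_out' y]
  rw [twMap_truncate, WittVector.coeff_truncate, WittVector.map_coeff,
    TruncatedWittVector.coeff_out]

end WittLocAux

open WittLocAux in
/-- `W_n(R[1/f])` is the localization of `W_n(R)` away from the Teichmüller lift `[f]`. -/
theorem truncatedWittVector_localization_away (p : ℕ) [hp : Fact p.Prime]
    (R : Type*) [CommRing R] (f : R) (n : ℕ) :
    letI : Algebra (TruncatedWittVector p n R)
        (TruncatedWittVector p n (Localization.Away f)) :=
      (twMap n (algebraMap R (Localization.Away f))).toAlgebra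
    IsLocalization.Away
      (WittVector.truncate n (WittVector.teichmuller p f))
      (TruncatedWittVector p n (Localization.Away f)) := by
  letI : Algebra (TruncatedWittVector p n R)
      (TruncatedWittVector p n (Localization.Away f)) :=
    (twMap n (algebraMap R (Localization.Away f))).toAlgebra
  set L := Localization.Away f with hL
  have halg : ∀ y, algebraMap (TruncatedWittVector p n R) (TruncatedWittVector p n L) y
      = twMap n (algebraMap R L) y := fun _ => rfl
  refine ⟨?_, ?_, ?_⟩
  · rintro ⟨-, k, rfl⟩
    have hu : IsUnit (algebraMap R L f) := IsLocalization.Away.algebraMap_isUnit f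
    rw [map_pow]
    refine IsUnit.pow k ?_
    rw [halg, twMap_truncate, map_teichmuller]
    exact (hu.map (teichmuller p)).map (WittVector.truncate n)
  · intro z
    have H : ∀ i : Fin n, ∃ (m : ℕ) (a : R),
        algebraMap R L f ^ m * z.coeff i = algebraMap R L a := by
      intro i
      obtain ⟨⟨a, s⟩, hs⟩ := IsLocalization.surj (M := Submonoid.powers f) (z.coeff i)
      obtain ⟨m, hm⟩ := s.2
      have hm' : f ^ m = (s : R) := hm
      exact ⟨m, a, by rw [← map_pow, hm', mul_comm]; exact hs⟩
    choose m a hma using H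
    set N := Finset.univ.sup m with hN
    refine ⟨⟨TruncatedWittVector.mk p (fun i => f ^ (N * p ^ (i : ℕ) - m i) * a i),
      ⟨WittVector.truncate n (teichmuller p f) ^ N, N, rfl⟩⟩, ?_⟩
    have key : (algebraMap (TruncatedWittVector p n R) (TruncatedWittVector p n L))
        (WittVector.truncate n (teichmuller p f) ^ N)
        = WittVector.truncate n (teichmuller p ((algebraMap R L f) ^ N)) := by
      rw [halg, map_pow, twMap_truncate, map_teichmuller, ← map_pow, ← map_pow]
    rw [key]
    ext i
    rw [mul_comm, trunc_teich_mul_coeff, halg, twMap_coeff, TruncatedWittVector.coeff_mk]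
    have hmi : m i ≤ N * p ^ (i : ℕ) :=
      le_trans (Finset.le_sup (Finset.mem_univ i))
        (Nat.le_mul_of_pos_right N (pow_pos hp.1.pos _))
    rw [← pow_mul, map_mul, map_pow, ← hma i, ← mul_assoc, ← pow_add,
      Nat.sub_add_cancel hmi]
  · intro x y hxy
    have H : ∀ i : Fin n, ∃ mi : ℕ, f ^ mi * x.coeff i = f ^ mi * y.coeff i := by
      intro i
      have h1 : algebraMap R L (x.coeff i) = algebraMap R L (y.coeff i) := by
        have := congrArg (fun w => TruncatedWittVector.coeff i w) hxy
        exact (twMap_coeff _ x i).symm.trans (this.trans (twMap_coeff _ y i))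
      obtain ⟨c, hc⟩ := IsLocalization.exists_of_eq (M := Submonoid.powers f) h1
      obtain ⟨mi, hmi⟩ := c.2
      have hmi' : f ^ mi = (c : R) := hmi
      exact ⟨mi, by rw [hmi']; exact hc⟩
    choose m hm using H
    set N := Finset.univ.sup m with hN
    refine ⟨⟨WittVector.truncate n (teichmuller p f) ^ N, N, rfl⟩, ?_⟩
    have key : WittVector.truncate n (teichmuller p f) ^ N
        = WittVector.truncate n (teichmuller p (f ^ N)) := by
      rw [← map_pow, ← map_pow]
    show WittVector.truncate n (teichmuller p f) ^ N * x
        = WittVector.truncate n (teichmuller p f) ^ N * y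
    rw [key]
    ext i
    rw [trunc_teich_mul_coeff, trunc_teich_mul_coeff]
    have hmi : m i ≤ N * p ^ (i : ℕ) :=
      le_trans (Finset.le_sup (Finset.mem_univ i))
        (Nat.le_mul_of_pos_right N (pow_pos hp.1.pos _))
    rw [← pow_mul, ← Nat.sub_add_cancel hmi, pow_add, mul_assoc, mul_assoc, hm i]
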